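/- For any dissimilarity space (X,d) with |X| = n, the number of distinct copoints of (X,d) (subsets of X that are a p-copoint for some p ∈ X) is at most 2n − 1. -/

import Mathlib

structure Dissim (X : Type*) where
  d : X → X → ℝ
  symm : ∀ x y, d x y = d y x
  nonneg : ∀ x y, 0 ≤ d x y
  self : ∀ x, d x x = 0

variable {X : Type*}

def Compatible (D : Dissim X) (lt : X → X → Prop) : Prop :=
  ∀ x y z : X, lt x y → lt y z → D.d x y ≤ D.d x z ∧ D.d y z ≤ D.d x z

def IsCompatOrder (D : Dissim X) (lt : X → X → Prop) : Prop :=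
  IsStrictTotalOrder X lt ∧ Compatible D lt

def Robinson (D : Dissim X) : Prop :=
  ∃ lt : X → X → Prop, IsCompatOrder D lt

def IsMmodule (D : Dissim X) (M : Set X) : Prop :=
  ∀ z ∉ M, ∀ x ∈ M, ∀ y ∈ M, D.d z x = D.d z y

def IsInterval (lt : X → X → Prop) (I : Set X) : Prop :=
  ∀ a b c : X, lt a b → lt b c → a ∈ I → c ∈ I → b ∈ I

def IsBlock (D : Dissim X) (Y : Set X) : Prop :=
  ∀ lt : X → X → Prop, IsCompatOrder D lt → IsInterval lt Y

noncomputable def diam (D : Dissim X) (Y : Set X) : ℝ :=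
  sSup (Set.image2 D.d Y Y)

def Gdelta (D : Dissim X) (δ : ℝ) : SimpleGraph X where
  Adj x y := x ≠ y ∧ D.d x y ≠ δ
  symm := ⟨by
    rintro x y ⟨hxy, hd⟩
    exact ⟨hxy.symm, by rw [D.symm]; exact hd⟩⟩
  loopless := ⟨by rintro x ⟨h, -⟩; exact h rfl⟩

def Gle (D : Dissim X) (δ : ℝ) : SimpleGraph X where
  Adj x y := x ≠ y ∧ D.d x y ≤ δ
  symm := ⟨by
    rintro x y ⟨hxy, hd⟩
    exact ⟨hxy.symm, by rw [D.symm]; exact hd⟩⟩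
  loopless := ⟨by rintro x ⟨h, -⟩; exact h rfl⟩

def Glt (D : Dissim X) (δ : ℝ) : SimpleGraph X where
  Adj x y := x ≠ y ∧ D.d x y < δ
  symm := ⟨by
    rintro x y ⟨hxy, hd⟩
    exact ⟨hxy.symm, by rw [D.symm]; exact hd⟩⟩
  loopless := ⟨by rintro x ⟨h, -⟩; exact h rfl⟩

def IsCompOf {V : Type*} (G : SimpleGraph V) (C : Set V) : Prop :=
  ∃ x : V, C = {y | G.Reachable x y}

def MMax (D : Dissim X) : Set (Set X) :=
  {M | IsMmodule D M ∧ M ≠ Set.univ ∧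
    ∀ M' : Set X, IsMmodule D M' → M' ≠ Set.univ → M ⊆ M' → M = M'}

def IsPartition {α : Type*} (P : Set (Set α)) : Prop :=
  (∀ A ∈ P, A.Nonempty) ∧
  (∀ A ∈ P, ∀ B ∈ P, A ≠ B → Disjoint A B) ∧
  ⋃₀ P = Set.univ

def IsCopartition {α : Type*} (P : Set (Set α)) : Prop :=
  IsPartition ((fun M => Mᶜ) '' P)

def SimpleGraph.restrictTo {V : Type*} (G : SimpleGraph V) (S : Set V) : SimpleGraph V where
  Adj x y := x ∈ S ∧ y ∈ S ∧ G.Adj x y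
  symm := ⟨by rintro x y ⟨hx, hy, h⟩; exact ⟨hy, hx, h.symm⟩⟩
  loopless := ⟨by rintro x ⟨-, -, h⟩; exact h.ne rfl⟩

def ConnectedWithin {V : Type*} (G : SimpleGraph V) (S : Set V) : Prop :=
  S.Nonempty ∧ ∀ x ∈ S, ∀ y ∈ S, (G.restrictTo S).Reachable x y

def IsCompWithin {V : Type*} (G : SimpleGraph V) (S : Set V) (C : Set V) : Prop :=
  ∃ x ∈ S, C = {y | (G.restrictTo S).Reachable x y}

def IsStrictTotalOrderOn {α : Type*} (S : Set α) (lt : α → α → Prop) : Prop :=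
  (∀ x ∈ S, ¬ lt x x) ∧
  (∀ x ∈ S, ∀ y ∈ S, ∀ z ∈ S, lt x y → lt y z → lt x z) ∧
  (∀ x ∈ S, ∀ y ∈ S, x ≠ y → (lt x y ∨ lt y x) ∧ ¬ (lt x y ∧ lt y x))

def CompatibleOn (D : Dissim X) (S : Set X) (lt : X → X → Prop) : Prop :=
  ∀ x ∈ S, ∀ y ∈ S, ∀ z ∈ S, lt x y → lt y z → D.d x y ≤ D.d x z ∧ D.d y z ≤ D.d x z

def IsCompatOrderOn (D : Dissim X) (S : Set X) (lt : X → X → Prop) : Prop :=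
  IsStrictTotalOrderOn S lt ∧ CompatibleOn D S lt

def FlatOn (D : Dissim X) (S : Set X) : Prop :=
  ∃ lt : X → X → Prop, IsCompatOrderOn D S lt ∧ (∃ x ∈ S, ∃ y ∈ S, lt x y) ∧
    ∀ lt' : X → X → Prop, IsCompatOrderOn D S lt' →
      (∀ x ∈ S, ∀ y ∈ S, (lt' x y ↔ lt x y)) ∨ (∀ x ∈ S, ∀ y ∈ S, (lt' x y ↔ lt y x))

def Flat (D : Dissim X) : Prop :=
  ∃ lt : X → X → Prop, IsCompatOrder D lt ∧ (∃ x y : X, lt x y) ∧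
    ∀ lt' : X → X → Prop, IsCompatOrder D lt' →
      (∀ x y : X, lt' x y ↔ lt x y) ∨ (∀ x y : X, lt' x y ↔ lt y x)

def IsCopointAt (D : Dissim X) (p : X) (C : Set X) : Prop :=
  IsMmodule D C ∧ C.Nonempty ∧ p ∉ C ∧
  ∀ C' : Set X, IsMmodule D C' → p ∉ C' → C ⊆ C' → C = C'

def bigGraph (D : Dissim X) (δ : ℝ) (I : Set (Set X)) : SimpleGraph (Set X) where
  Adj C C' := C ∈ I ∧ C' ∈ I ∧ C ≠ C' ∧ ∃ x ∈ C, ∃ y ∈ C', δ < D.d x y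
  symm := ⟨by
    rintro C C' ⟨hC, hC', hne, x, hx, y, hy, hd⟩
    exact ⟨hC', hC, hne.symm, y, hy, x, hx, by rw [D.symm]; exact hd⟩⟩
  loopless := ⟨by rintro C ⟨-, -, hne, -⟩; exact hne rfl⟩


section Aux

variable {X : Type*}

/-- Two sets overlap: they intersect and neither contains the other. -/
def Ov (A B : Set X) : Prop := (A ∩ B).Nonempty ∧ ¬ A ⊆ B ∧ ¬ B ⊆ A

lemma Ov.symm' {A B : Set X} (h : Ov A B) : Ov B A :=
  ⟨by rw [Set.inter_comm]; exact h.1, h.2.2, h.2.1⟩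

lemma mm_univ (D : Dissim X) : IsMmodule D (Set.univ : Set X) := by
  intro z hz; exact absurd (Set.mem_univ z) hz

lemma mm_union {D : Dissim X} {M N : Set X} (hM : IsMmodule D M) (hN : IsMmodule D N)
    (hw : (M ∩ N).Nonempty) : IsMmodule D (M ∪ N) := by
  obtain ⟨w, hwM, hwN⟩ := hw
  intro z hz x hx y hy
  have hzM : z ∉ M := fun h => hz (Or.inl h)
  have hzN : z ∉ N := fun h => hz (Or.inr h)
  have key : ∀ u ∈ M ∪ N, D.d z u = D.d z w := by
    rintro u (hu | hu)
    · exact hM z hzM u hu w hwM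
    · exact hN z hzN u hu w hwN
  rw [key x hx, key y hy]

lemma mm_sd {D : Dissim X} {M N : Set X} (hM : IsMmodule D M) (hN : IsMmodule D N)
    {a b c : X} (ha : a ∈ M ∩ N) (hb : b ∈ M \ N) (hc : c ∈ N \ M) :
    IsMmodule D (M \ N ∪ N \ M) := by
  intro z hz x hx y hy
  have hz1 : z ∉ M \ N := fun h => hz (Or.inl h)
  have hz2 : z ∉ N \ M := fun h => hz (Or.inr h)
  by_cases hzM : z ∈ M
  · have hzN : z ∈ N := by by_contra h; exact hz1 ⟨hzM, h⟩
    rcases hx with hx | hx <;> rcases hy with hy | hy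
    · have h1 : D.d x z = D.d x c := hN x hx.2 z hzN c hc.1
      have h2 : D.d y z = D.d y c := hN y hy.2 z hzN c hc.1
      have h3 : D.d c x = D.d c y := hM c hc.2 x hx.1 y hy.1
      rw [D.symm z x, D.symm z y, h1, h2, D.symm x c, D.symm y c, h3]
    · have h1 : D.d x z = D.d x y := hN x hx.2 z hzN y hy.1
      have h2 : D.d y z = D.d y x := hM y hy.2 z hzM x hx.1
      rw [D.symm z x, D.symm z y, h1, h2, D.symm y x]
    · have h1 : D.d x z = D.d x y := hM x hx.2 z hzM y hy.1
      have h2 : D.d y z = D.d y x := hN y hy.2 z hzN x hx.1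
      rw [D.symm z x, D.symm z y, h1, h2, D.symm x y]
    · have h1 : D.d x z = D.d x b := hM x hx.2 z hzM b hb.1
      have h2 : D.d y z = D.d y b := hM y hy.2 z hzM b hb.1
      have h3 : D.d b x = D.d b y := hN b hb.2 x hx.1 y hy.1
      rw [D.symm z x, D.symm z y, h1, h2, D.symm x b, D.symm y b, h3]
  · have hzN : z ∉ N := fun h => hz2 ⟨h, hzM⟩
    have key : ∀ u ∈ M \ N ∪ N \ M, D.d z u = D.d z a := by
      rintro u (hu | hu)
      · exact hM z hzM u hu.1 a ha.1
      · exact hN z hzN u hu.1 a ha.2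
    rw [key x hx, key y hy]

/-- The family of mmodules strictly containing `C`. -/
def copFam (D : Dissim X) (C : Set X) : Set (Set X) := {N | IsMmodule D N ∧ C ⊂ N}

/-- The minimum mmodule strictly containing a copoint `C`. -/
def Mmin (D : Dissim X) (C : Set X) : Set X := ⋂₀ copFam D C

def Dmin (D : Dissim X) (C : Set X) : Set X := Mmin D C \ C

/-- A strong mmodule: one that overlaps no mmodule. -/
def StrongM (D : Dissim X) (A : Set X) : Prop :=
  IsMmodule D A ∧ ∀ N : Set X, IsMmodule D N → ¬ Ov A N

section Copoint

variable {D : Dissim X} {p : X} {C : Set X}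

lemma mem_fam_p (hC : IsCopointAt D p C) {N : Set X} (hN : N ∈ copFam D C) : p ∈ N := by
  by_contra hp
  exact hN.2.ne (hC.2.2.2 N hN.1 hp hN.2.subset)

lemma Mmin_mm (D : Dissim X) (C : Set X) : IsMmodule D (Mmin D C) := by
  intro z hz x hx y hy
  rw [Mmin, Set.mem_sInter] at hz
  push_neg at hz
  obtain ⟨N, hN, hzN⟩ := hz
  exact hN.1 z hzN x (hx N hN) y (hy N hN)

lemma univ_mem_fam (hC : IsCopointAt D p C) : (Set.univ : Set X) ∈ copFam D C := by
  refine ⟨mm_univ D, Set.ssubset_univ_iff.2 ?_⟩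
  rintro rfl
  exact hC.2.2.1 (Set.mem_univ p)

lemma C_subset_Mmin (D : Dissim X) (C : Set X) : C ⊆ Mmin D C :=
  Set.subset_sInter fun _ hN => hN.2.subset

lemma Mmin_subset {N : Set X} (hN : N ∈ copFam D C) : Mmin D C ⊆ N :=
  Set.sInter_subset_of_mem hN

lemma p_mem_Dmin (hC : IsCopointAt D p C) : p ∈ Dmin D C :=
  ⟨Set.mem_sInter.2 fun _ hN => mem_fam_p hC hN, hC.2.2.1⟩

lemma Mmin_diff_Dmin (D : Dissim X) (C : Set X) : Mmin D C \ Dmin D C = C :=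
  Set.diff_diff_cancel_left (C_subset_Mmin D C)

/-- If an mmodule overlaps the copoint `C`, it contains `Dmin D C`. -/
lemma Dmin_subset_ov (hC : IsCopointAt D p C) {N : Set X} (hN : IsMmodule D N)
    (hov : Ov C N) : Dmin D C ⊆ N := by
  have hmem : C ∪ N ∈ copFam D C := by
    refine ⟨mm_union hC.1 hN hov.1, Set.subset_union_left, fun hsub => ?_⟩
    exact hov.2.2 fun u hu => hsub (Or.inr hu)
  intro x hx
  rcases Mmin_subset hmem hx.1 with h | h
  · exact absurd h hx.2
  · exact h

lemma Dmin_mm (hC : IsCopointAt D p C) {N₀ : Set X} (h0 : IsMmodule D N₀)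
    (hov : Ov C N₀) : IsMmodule D (Dmin D C) := by
  obtain ⟨a, haC, haN⟩ := hov.1
  obtain ⟨b, hbC, hbN⟩ := Set.not_subset.1 hov.2.1
  obtain ⟨c, hcN, hcC⟩ := Set.not_subset.1 hov.2.2
  have hS : IsMmodule D (C \ N₀ ∪ N₀ \ C) := mm_sd hC.1 h0 ⟨haC, haN⟩ ⟨hbC, hbN⟩ ⟨hcN, hcC⟩
  have hDN : Dmin D C ⊆ N₀ := Dmin_subset_ov hC h0 hov
  intro z hz x hx y hy
  by_cases hzM : z ∈ Mmin D C
  · have hzC : z ∈ C := by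
      by_contra h; exact hz ⟨hzM, h⟩
    by_cases hzN : z ∈ N₀
    · have hzS : z ∉ C \ N₀ ∪ N₀ \ C := by
        rintro (h | h)
        · exact h.2 hzN
        · exact h.2 hzC
      exact hS z hzS x (Or.inr ⟨hDN hx, hx.2⟩) y (Or.inr ⟨hDN hy, hy.2⟩)
    · exact h0 z hzN x (hDN hx) y (hDN hy)
  · exact Mmin_mm D C z hzM x hx.1 y hy.1

lemma Dmin_strong (hC : IsCopointAt D p C) {N₀ : Set X} (h0 : IsMmodule D N₀)
    (hov : Ov C N₀) : StrongM D (Dmin D C) := by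
  refine ⟨Dmin_mm hC h0 hov, ?_⟩
  intro N hN hovDN
  obtain ⟨e, heD, heN⟩ := hovDN.1
  by_cases h1 : (C ∩ N).Nonempty
  · by_cases hNC : N ⊆ C
    · exact heD.2 (hNC heN)
    · by_cases hCN : C ⊆ N
      · have hmem : N ∈ copFam D C := ⟨hN, hCN, hNC⟩
        exact hovDN.2.1 fun u hu => Mmin_subset hmem hu.1
      · exact hovDN.2.1 (Dmin_subset_ov hC hN ⟨h1, hCN, hNC⟩)
  · by_cases h2 : N ⊆ Mmin D C
    · exact hovDN.2.2 fun u hu => ⟨h2 hu, fun huC => h1 ⟨u, huC, hu⟩⟩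
    · obtain ⟨f, hfN, hfM⟩ := Set.not_subset.1 h2
      obtain ⟨x₀, hx₀⟩ := hC.2.1
      have hx₀N : x₀ ∉ N := fun h => h1 ⟨x₀, hx₀, h⟩
      have hS : IsMmodule D (Mmin D C \ N ∪ N \ Mmin D C) :=
        mm_sd (Mmin_mm D C) hN ⟨heD.1, heN⟩ ⟨C_subset_Mmin D C hx₀, hx₀N⟩ ⟨hfN, hfM⟩
      have hmem : (Mmin D C \ N ∪ N \ Mmin D C) ∈ copFam D C := by
        refine ⟨hS, fun u hu => Or.inl ⟨C_subset_Mmin D C hu, fun h => h1 ⟨u, hu, h⟩⟩, ?_⟩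
        intro hsub
        rcases hsub (Or.inr ⟨hfN, hfM⟩) with h
        exact hfM (C_subset_Mmin D C h)
      rcases Mmin_subset hmem heD.1 with h | h
      · exact h.2 heN
      · exact h.2 heD.1

lemma Dmin_not_copoint (hC : IsCopointAt D p C) {N₀ : Set X} (h0 : IsMmodule D N₀)
    (hov : Ov C N₀) {q : X} (hq : IsCopointAt D q (Dmin D C)) : False := by
  obtain ⟨a, haC, haN⟩ := hov.1
  obtain ⟨b, hbC, hbN⟩ := Set.not_subset.1 hov.2.1
  obtain ⟨c, hcN, hcC⟩ := Set.not_subset.1 hov.2.2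
  have hDsub : Dmin D C ⊆ Mmin D C := Set.diff_subset
  have hqM : q ∈ Mmin D C := by
    by_contra hqM
    have heq := hq.2.2.2 (Mmin D C) (Mmin_mm D C) hqM hDsub
    obtain ⟨x₀, hx₀⟩ := hC.2.1
    have : x₀ ∈ Dmin D C := heq ▸ C_subset_Mmin D C hx₀
    exact this.2 hx₀
  have hqC : q ∈ C := by
    by_contra h
    exact hq.2.2.1 ⟨hqM, h⟩
  have hDN : Dmin D C ⊆ N₀ := Dmin_subset_ov hC h0 hov
  have hqN : q ∈ N₀ := by
    by_contra hqN
    have heq := hq.2.2.2 N₀ h0 hqN hDN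
    have : a ∈ Dmin D C := heq ▸ haN
    exact this.2 haC
  have hS : IsMmodule D (C \ N₀ ∪ N₀ \ C) := mm_sd hC.1 h0 ⟨haC, haN⟩ ⟨hbC, hbN⟩ ⟨hcN, hcC⟩
  have hqS : q ∉ C \ N₀ ∪ N₀ \ C := by
    rintro (h | h)
    · exact h.2 hqN
    · exact h.2 hqC
  have hDS : Dmin D C ⊆ C \ N₀ ∪ N₀ \ C := fun u hu => Or.inr ⟨hDN hu, hu.2⟩
  have heq := hq.2.2.2 _ hS hqS hDS
  have : b ∈ Dmin D C := heq ▸ Or.inl ⟨hbC, hbN⟩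
  exact this.2 hbC

end Copoint

lemma eq_of_Dmin_eq {D : Dissim X} {p₁ p₂ : X} {C₁ C₂ : Set X}
    (hC₁ : IsCopointAt D p₁ C₁) (hC₂ : IsCopointAt D p₂ C₂)
    (h : Dmin D C₁ = Dmin D C₂) : C₁ = C₂ := by
  by_contra hne
  have hp₁ : p₁ ∈ Dmin D C₁ := p_mem_Dmin hC₁
  have hp₂ : p₂ ∈ Dmin D C₂ := p_mem_Dmin hC₂
  -- auxiliary: if Mmin C₁ ⊆ Mmin C₂ and C₁ ≠ C₂ then False
  have aux : ∀ (p₁ p₂ : X) (C₁ C₂ : Set X), IsCopointAt D p₁ C₁ → IsCopointAt D p₂ C₂ →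
      Dmin D C₁ = Dmin D C₂ → C₁ ≠ C₂ → Mmin D C₁ ⊆ Mmin D C₂ → False := by
    intro p₁ p₂ C₁ C₂ hC₁ hC₂ h hne h12
    have hsub : C₁ ⊆ C₂ := by
      intro x hx
      have hxM : x ∈ Mmin D C₂ := h12 (C_subset_Mmin D C₁ hx)
      have hxD : x ∉ Dmin D C₂ := by rw [← h]; exact fun hd => hd.2 hx
      have : x ∈ Mmin D C₂ \ Dmin D C₂ := ⟨hxM, hxD⟩
      rwa [Mmin_diff_Dmin] at this
    have hmem : C₂ ∈ copFam D C₁ := ⟨hC₂.1, hsub, fun h' => hne (Set.Subset.antisymm hsub h')⟩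
    have : p₂ ∈ C₂ := Mmin_subset hmem ((h ▸ p_mem_Dmin hC₂ : p₂ ∈ Dmin D C₁).1)
    exact hC₂.2.2.1 this
  by_cases h12 : Mmin D C₁ ⊆ Mmin D C₂
  · exact aux p₁ p₂ C₁ C₂ hC₁ hC₂ h hne h12
  by_cases h21 : Mmin D C₂ ⊆ Mmin D C₁
  · exact aux p₂ p₁ C₂ C₁ hC₂ hC₁ h.symm (Ne.symm hne) h21
  -- Mmin C₁ and Mmin C₂ overlap
  obtain ⟨b, hbM₁, hbM₂⟩ := Set.not_subset.1 h12
  obtain ⟨c, hcM₂, hcM₁⟩ := Set.not_subset.1 h21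
  have hp₁M₂ : p₁ ∈ Mmin D C₂ := (h ▸ hp₁ : p₁ ∈ Dmin D C₂).1
  have hS : IsMmodule D (Mmin D C₁ \ Mmin D C₂ ∪ Mmin D C₂ \ Mmin D C₁) :=
    mm_sd (Mmin_mm D C₁) (Mmin_mm D C₂) ⟨hp₁.1, hp₁M₂⟩ ⟨hbM₁, hbM₂⟩ ⟨hcM₂, hcM₁⟩
  have hbC₁ : b ∈ C₁ := by
    have : b ∉ Dmin D C₁ := fun hd => hbM₂ ((h ▸ hd : b ∈ Dmin D C₂).1)
    have hb' : b ∈ Mmin D C₁ \ Dmin D C₁ := ⟨hbM₁, this⟩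
    rwa [Mmin_diff_Dmin] at hb'
  have hp₁S : p₁ ∉ Mmin D C₁ \ Mmin D C₂ ∪ Mmin D C₂ \ Mmin D C₁ := by
    rintro (h' | h')
    · exact h'.2 hp₁M₂
    · exact h'.2 hp₁.1
  by_cases hCS : C₁ ⊆ Mmin D C₁ \ Mmin D C₂ ∪ Mmin D C₂ \ Mmin D C₁
  · have hmem : (Mmin D C₁ \ Mmin D C₂ ∪ Mmin D C₂ \ Mmin D C₁) ∈ copFam D C₁ := by
      refine ⟨hS, hCS, fun hsub => ?_⟩
      exact hcM₁ (C_subset_Mmin D C₁ (hsub (Or.inr ⟨hcM₂, hcM₁⟩)))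
    exact hp₁S (Mmin_subset hmem hp₁.1)
  · have hov : Ov C₁ (Mmin D C₁ \ Mmin D C₂ ∪ Mmin D C₂ \ Mmin D C₁) := by
      refine ⟨⟨b, hbC₁, Or.inl ⟨hbM₁, hbM₂⟩⟩, hCS, fun hsub => ?_⟩
      exact hcM₁ (C_subset_Mmin D C₁ (hsub (Or.inr ⟨hcM₂, hcM₁⟩)))
    exact hp₁S (Dmin_subset_ov hC₁ hS hov hp₁)

open Finset in
lemma laminar_card {α : Type*} [DecidableEq α] :
    ∀ (n : ℕ) (S : Finset α) (F : Finset (Finset α)), S.card ≤ n →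
      (∀ A ∈ F, A ⊆ S) → (∀ A ∈ F, A.Nonempty) →
      (∀ A ∈ F, ∀ B ∈ F, A ⊆ B ∨ B ⊆ A ∨ Disjoint A B) →
      F.card ≤ 2 * S.card - 1 := by
  intro n
  induction n with
  | zero =>
    intro S F hS hsub hne _
    have hF : F = ∅ := by
      rw [Finset.eq_empty_iff_forall_notMem]
      intro A hA
      obtain ⟨x, hx⟩ := hne A hA
      have : x ∈ S := hsub A hA hx
      rw [Finset.card_eq_zero.1 (Nat.le_zero.1 hS)] at this
      exact absurd this (Finset.notMem_empty x)
    simp [hF]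
  | succ n ih =>
    intro S F hS hsub hne hlam
    set G := F.erase S with hGdef
    have hGF : ∀ A ∈ G, A ∈ F := fun A hA => Finset.mem_of_mem_erase hA
    have hGne : ∀ A ∈ G, A ≠ S := fun A hA => Finset.ne_of_mem_erase hA
    have hFG : F.card ≤ G.card + 1 := by
      have : F ⊆ insert S G := by
        intro A hA
        by_cases h : A = S
        · exact h ▸ Finset.mem_insert_self S G
        · exact Finset.mem_insert_of_mem (Finset.mem_erase.2 ⟨h, hA⟩)
      calc F.card ≤ (insert S G).card := Finset.card_le_card this
        _ ≤ G.card + 1 := Finset.card_insert_le S G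
    set Mx := G.filter (fun M => ∀ B ∈ G, ¬ M ⊂ B) with hMxdef
    have hmax : ∀ A ∈ G, ∃ M ∈ Mx, A ⊆ M := by
      intro A hA
      obtain ⟨M, hM, hMmax⟩ := Set.Finite.exists_maximalFor id
        {B | B ∈ G ∧ A ⊆ B} (G.finite_toSet.subset (fun B hB => hB.1)) ⟨A, hA, Finset.Subset.refl A⟩
      refine ⟨M, Finset.mem_filter.2 ⟨hM.1, ?_⟩, hM.2⟩
      intro B hB hMB
      exact hMB.ne (Finset.Subset.antisymm hMB.subset (hMmax ⟨hB, hM.2.trans hMB.subset⟩ hMB.subset))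
    have hMxG : ∀ M ∈ Mx, M ∈ G := fun M hM => (Finset.mem_filter.1 hM).1
    have hdisj : ∀ M ∈ Mx, ∀ M' ∈ Mx, M ≠ M' → Disjoint M M' := by
      intro M hM M' hM' hne'
      rcases hlam M (hGF M (hMxG M hM)) M' (hGF M' (hMxG M' hM')) with h | h | h
      · exact absurd (lt_of_le_of_ne h hne') ((Finset.mem_filter.1 hM).2 M' (hMxG M' hM'))
      · exact absurd (lt_of_le_of_ne h (Ne.symm hne'))
          ((Finset.mem_filter.1 hM').2 M (hMxG M hM))
      · exact h
    have hcover : G ⊆ Mx.biUnion (fun M => G.filter (fun A => A ⊆ M)) := by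
      intro A hA
      obtain ⟨M, hM, hAM⟩ := hmax A hA
      exact Finset.mem_biUnion.2 ⟨M, hM, Finset.mem_filter.2 ⟨hA, hAM⟩⟩
    have hGcard : G.card ≤ ∑ M ∈ Mx, (G.filter (fun A => A ⊆ M)).card :=
      le_trans (Finset.card_le_card hcover) (Finset.card_biUnion_le)
    have hIH : ∀ M ∈ Mx, (G.filter (fun A => A ⊆ M)).card ≤ 2 * M.card - 1 := by
      intro M hM
      have hMS : M ⊆ S := hsub M (hGF M (hMxG M hM))
      have hMcard : M.card ≤ n := by
        have : M.card < S.card :=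
          Finset.card_lt_card (lt_of_le_of_ne hMS (hGne M (hMxG M hM)))
        omega
      refine ih M (G.filter (fun A => A ⊆ M)) hMcard ?_ ?_ ?_
      · intro A hA; exact (Finset.mem_filter.1 hA).2
      · intro A hA; exact hne A (hGF A (Finset.mem_filter.1 hA).1)
      · intro A hA B hB
        exact hlam A (hGF A (Finset.mem_filter.1 hA).1) B (hGF B (Finset.mem_filter.1 hB).1)
    have hsum : ∑ M ∈ Mx, M.card ≤ S.card := by
      rw [← Finset.card_biUnion hdisj]
      exact Finset.card_le_card (fun x hx => by
        obtain ⟨M, hM, hxM⟩ := Finset.mem_biUnion.1 hx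
        exact hsub M (hGF M (hMxG M hM)) hxM)
    have hone : ∀ M ∈ Mx, 1 ≤ M.card := by
      intro M hM
      exact Finset.card_pos.2 (hne M (hGF M (hMxG M hM)))
    by_cases hMx0 : Mx = ∅
    · have hG0 : G = ∅ := by
        rw [Finset.eq_empty_iff_forall_notMem]
        intro A hA
        obtain ⟨M, hM, _⟩ := hmax A hA
        rw [hMx0] at hM
        exact absurd hM (Finset.notMem_empty M)
      by_cases hSF : S ∈ F
      · have hS1 : 1 ≤ S.card := Finset.card_pos.2 (hne S hSF)
        have : G.card = 0 := by rw [hG0]; rfl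
        omega
      · have : F = ∅ := by rw [hGdef] at hG0; rwa [Finset.erase_eq_of_notMem hSF] at hG0
        simp [this]
    · have hsum2 : ∑ M ∈ Mx, (2 * M.card - 1) + Mx.card = 2 * ∑ M ∈ Mx, M.card := by
        rw [Finset.card_eq_sum_ones, ← Finset.sum_add_distrib, Finset.mul_sum]
        exact Finset.sum_congr rfl (fun M hM => by have := hone M hM; omega)
      have hle : G.card ≤ ∑ M ∈ Mx, (2 * M.card - 1) :=
        le_trans hGcard (Finset.sum_le_sum hIH)
      by_cases hk1 : Mx.card = 1
      · obtain ⟨M, hMeq⟩ := Finset.card_eq_one.1 hk1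
        have hMMx : M ∈ Mx := hMeq ▸ Finset.mem_singleton_self M
        have hMS : M ⊆ S := hsub M (hGF M (hMxG M hMMx))
        have hMlt : M.card < S.card :=
          Finset.card_lt_card (lt_of_le_of_ne hMS (hGne M (hMxG M hMMx)))
        have : ∑ M' ∈ Mx, M'.card = M.card := by rw [hMeq, Finset.sum_singleton]
        omega
      · have hk2 : 2 ≤ Mx.card := by
          have : 0 < Mx.card := Finset.card_pos.2 (Finset.nonempty_of_ne_empty hMx0)
          omega
        by_cases hSF : S ∈ F
        · have hS1 : 1 ≤ S.card := Finset.card_pos.2 (hne S hSF)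
          omega
        · omega

end Aux

/-- a dissimilarity space on n points has at most 2n - 1 distinct
copoints. -/
theorem stmt16 [Fintype X] [Nonempty X] (D : Dissim X) :
    {C : Set X | ∃ p : X, IsCopointAt D p C}.ncard ≤ 2 * Fintype.card X - 1 := by
  classical
  set Cops := {C : Set X | ∃ p : X, IsCopointAt D p C} with hCops
  set Φ : Set X → Set X := fun C => if StrongM D C then C else Dmin D C with hΦ
  have getov : ∀ {C : Set X} {p : X}, IsCopointAt D p C → ¬ StrongM D C →
      ∃ N, IsMmodule D N ∧ Ov C N := by
    intro C p hp hs
    by_contra hcon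
    push_neg at hcon
    exact hs ⟨hp.1, fun N hN => hcon N hN⟩
  have hstrong : ∀ C ∈ Cops, StrongM D (Φ C) := by
    intro C hC
    obtain ⟨p, hp⟩ := hC
    by_cases hs : StrongM D C
    · simp [hΦ, hs]
    · obtain ⟨N, hN, hov⟩ := getov hp hs
      simpa [hΦ, hs] using Dmin_strong hp hN hov
  have hnonempty : ∀ C ∈ Cops, (Φ C).Nonempty := by
    intro C hC
    obtain ⟨p, hp⟩ := hC
    by_cases hs : StrongM D C
    · simpa [hΦ, hs] using hp.2.1
    · exact ⟨p, by simpa [hΦ, hs] using p_mem_Dmin hp⟩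
  have hinj : Set.InjOn Φ Cops := by
    intro C₁ h₁ C₂ h₂ heq
    obtain ⟨p₁, hp₁⟩ := h₁
    obtain ⟨p₂, hp₂⟩ := h₂
    by_cases hs₁ : StrongM D C₁ <;> by_cases hs₂ : StrongM D C₂
    · simpa [hΦ, hs₁, hs₂] using heq
    · exfalso
      obtain ⟨N, hN, hov⟩ := getov hp₂ hs₂
      refine Dmin_not_copoint hp₂ hN hov (q := p₁) ?_
      have h1 : Φ C₁ = C₁ := by simp [hΦ, hs₁]
      have h2 : Φ C₂ = Dmin D C₂ := by simp [hΦ, hs₂]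
      rw [← h2, ← heq, h1]
      exact hp₁
    · exfalso
      obtain ⟨N, hN, hov⟩ := getov hp₁ hs₁
      refine Dmin_not_copoint hp₁ hN hov (q := p₂) ?_
      have h1 : Φ C₂ = C₂ := by simp [hΦ, hs₂]
      have h2 : Φ C₁ = Dmin D C₁ := by simp [hΦ, hs₁]
      rw [← h2, heq, h1]
      exact hp₂
    · refine eq_of_Dmin_eq hp₁ hp₂ ?_
      have h1 : Φ C₁ = Dmin D C₁ := by simp [hΦ, hs₁]
      have h2 : Φ C₂ = Dmin D C₂ := by simp [hΦ, hs₂]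
      rw [← h1, ← h2, heq]
  set Img := Φ '' Cops with hImg
  have hpair : ∀ A ∈ Img, ∀ B ∈ Img, A ⊆ B ∨ B ⊆ A ∨ Disjoint A B := by
    rintro A ⟨C₁, h₁, rfl⟩ B ⟨C₂, h₂, rfl⟩
    have h := (hstrong C₁ h₁).2 (Φ C₂) (hstrong C₂ h₂).1
    by_cases hab : Φ C₁ ⊆ Φ C₂
    · exact Or.inl hab
    by_cases hba : Φ C₂ ⊆ Φ C₁
    · exact Or.inr (Or.inl hba)
    refine Or.inr (Or.inr (Set.disjoint_iff_inter_eq_empty.2 ?_))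
    by_contra hne
    exact h ⟨Set.nonempty_iff_ne_empty.2 hne, hab, hba⟩
  have hImgNe : ∀ B ∈ Img, B.Nonempty := by
    rintro B ⟨C, hC, rfl⟩
    exact hnonempty C hC
  have hfinCops : Cops.Finite := Set.toFinite _
  set F : Finset (Finset X) := Finset.univ.filter (fun A : Finset X => (↑A : Set X) ∈ Img)
    with hF
  have hmemF : ∀ A : Finset X, A ∈ F ↔ (↑A : Set X) ∈ Img := by
    intro A
    simp [hF]
  have hImgF : Img = (fun A : Finset X => (↑A : Set X)) '' ↑F := by
    ext B
    constructor
    · intro hB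
      refine ⟨(Set.toFinite B).toFinset, ?_, Set.Finite.coe_toFinset _⟩
      rw [Finset.mem_coe, hmemF, Set.Finite.coe_toFinset]
      exact hB
    · rintro ⟨A, hA, rfl⟩
      rw [Finset.mem_coe, hmemF] at hA
      exact hA
  have hcard : Cops.ncard = F.card := by
    calc Cops.ncard = Img.ncard := (Set.ncard_image_of_injOn hinj).symm
      _ = ((fun A : Finset X => (↑A : Set X)) '' ↑F).ncard := by rw [hImgF]
      _ = (↑F : Set (Finset X)).ncard :=
          Set.ncard_image_of_injective _ Finset.coe_injective
      _ = F.card := Set.ncard_coe_finset F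
  rw [hcard]
  have hlam := laminar_card (Fintype.card X) Finset.univ F
    (le_of_eq (Finset.card_univ))
    (fun A _ => Finset.subset_univ A)
    (by
      intro A hA
      rw [← Finset.coe_nonempty]
      exact hImgNe _ ((hmemF A).1 hA))
    (by
      intro A hA B hB
      rcases hpair _ ((hmemF A).1 hA) _ ((hmemF B).1 hB) with h | h | h
      · exact Or.inl (Finset.coe_subset.1 h)
      · exact Or.inr (Or.inl (Finset.coe_subset.1 h))
      · exact Or.inr (Or.inr (Finset.disjoint_coe.1 h)))
  simpa [Finset.card_univ] using hlam
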